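/- arXiv:math/0512567 — 2 statements merged into one kernel-verified Lean document; each statement's English description precedes it below -/
import Mathlib

section
/- Let S = {0, a_1, a_2, a_3, x_1, x_2} be a commutative semigroup with six distinct elements, with zero element 0, such that for distinct nonzero u, v ∈ S one has uv = 0 if and only if {u,v} is one of {a_1,a_2}, {a_1,a_3}, {a_2,a_3}, {a_1,x_1}, {a_2,x_2} (i.e., Γ(S) is M_{3,2} with this labeling). Then necessarily a_1x_2 = a_1, a_2x_1 = a_2, a_3x_1 = a_3, a_3x_2 = a_3, x_1² = x_1, x_2² = x_2, x_1x_2 = a_3, a_3² = a_3, a_1² ∈ {0, a_1}, and a_2² ∈ {0, a_2}. -/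
/-- A commutative semigroup with a (left- and right-) absorbing zero element. -/
class CommSemigroupWithZero (S : Type*) extends CommSemigroup S, MulZeroClass S

/-- A zero-divisor semigroup: every element is annihilated by some nonzero element. -/
def IsZeroDivisorSemigroup (S : Type*) [CommSemigroupWithZero S] : Prop :=
  ∀ s : S, ∃ t : S, t ≠ 0 ∧ s * t = 0

/-- The zero-divisor graph Γ(S): vertices are the nonzero zero-divisors, distinct
vertices are adjacent iff their product is zero. -/
def zdGraph (S : Type*) [CommSemigroupWithZero S] :
    SimpleGraph {s : S // s ≠ 0 ∧ ∃ t : S, t ≠ 0 ∧ s * t = 0} where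
  Adj x y := x ≠ y ∧ (x : S) * y = 0
  symm := by
    constructor
    rintro x y ⟨h1, h2⟩
    exact ⟨h1.symm, by rwa [mul_comm]⟩
  loopless := ⟨fun x h => h.1 rfl⟩

/-- **Theorem 2.3(2), necessity.** If S = {0, a₁, a₂, a₃, x₁, x₂} is a commutative
semigroup with zero whose zero-divisor graph is M_{3,2} (with edges a₁a₂, a₁a₃,
a₂a₃, a₁x₁, a₂x₂), then the multiplication is forced as listed. -/
theorem M32_multiplication_forced (S : Type*) [CommSemigroupWithZero S]
    (a1 a2 a3 x1 x2 : S)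
    (hnodup : List.Nodup [0, a1, a2, a3, x1, x2])
    (hall : ∀ s : S, s = 0 ∨ s = a1 ∨ s = a2 ∨ s = a3 ∨ s = x1 ∨ s = x2)
    (hadj : ∀ u v : S, u ≠ 0 → v ≠ 0 → u ≠ v →
      (u * v = 0 ↔
        ({u, v} : Set S) = {a1, a2} ∨ ({u, v} : Set S) = {a1, a3} ∨
        ({u, v} : Set S) = {a2, a3} ∨ ({u, v} : Set S) = {a1, x1} ∨
        ({u, v} : Set S) = {a2, x2})) :
    a1 * x2 = a1 ∧ a2 * x1 = a2 ∧ a3 * x1 = a3 ∧ a3 * x2 = a3 ∧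
    x1 * x1 = x1 ∧ x2 * x2 = x2 ∧ x1 * x2 = a3 ∧ a3 * a3 = a3 ∧
    (a1 * a1 = 0 ∨ a1 * a1 = a1) ∧ (a2 * a2 = 0 ∨ a2 * a2 = a2) := by
  simp only [List.nodup_cons, List.mem_cons, List.not_mem_nil, or_false, List.nodup_nil,
    and_true, List.mem_singleton, not_or] at hnodup
  obtain ⟨⟨h01, h02, h03, h04, h05⟩, ⟨h12, h13, h14, h15⟩, ⟨h23, h24, h25⟩, ⟨h34, h35⟩,
    h45, -⟩ := hnodup
  have n1 : a1 ≠ 0 := fun h => h01 h.symm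
  have n2 : a2 ≠ 0 := fun h => h02 h.symm
  have n3 : a3 ≠ 0 := fun h => h03 h.symm
  have nx1 : x1 ≠ 0 := fun h => h04 h.symm
  have nx2 : x2 ≠ 0 := fun h => h05 h.symm
  have h21 : a2 ≠ a1 := Ne.symm h12
  have h31 : a3 ≠ a1 := Ne.symm h13
  have h32 : a3 ≠ a2 := Ne.symm h23
  have h41 : x1 ≠ a1 := Ne.symm h14
  have h42 : x1 ≠ a2 := Ne.symm h24
  have h43 : x1 ≠ a3 := Ne.symm h34
  have h51 : x2 ≠ a1 := Ne.symm h15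
  have h52 : x2 ≠ a2 := Ne.symm h25
  have h53 : x2 ≠ a3 := Ne.symm h35
  have h54 : x2 ≠ x1 := Ne.symm h45
  -- edge products are zero
  have z12 : a1 * a2 = 0 := (hadj a1 a2 n1 n2 h12).mpr (Or.inl rfl)
  have z13 : a1 * a3 = 0 := (hadj a1 a3 n1 n3 h13).mpr (Or.inr (Or.inl rfl))
  have z23 : a2 * a3 = 0 := (hadj a2 a3 n2 n3 h23).mpr (Or.inr (Or.inr (Or.inl rfl)))
  have z1x1 : a1 * x1 = 0 :=
    (hadj a1 x1 n1 nx1 h14).mpr (Or.inr (Or.inr (Or.inr (Or.inl rfl))))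
  have z2x2 : a2 * x2 = 0 :=
    (hadj a2 x2 n2 nx2 h25).mpr (Or.inr (Or.inr (Or.inr (Or.inr rfl))))
  -- non-edge products are nonzero
  have n1x2 : a1 * x2 ≠ 0 := by
    intro h
    have := (hadj a1 x2 n1 nx2 h15).mp h
    simp only [Set.pair_eq_pair_iff] at this
    tauto
  have n2x1 : a2 * x1 ≠ 0 := by
    intro h
    have := (hadj a2 x1 n2 nx1 h24).mp h
    simp only [Set.pair_eq_pair_iff] at this
    tauto
  have n3x1 : a3 * x1 ≠ 0 := by
    intro h
    have := (hadj a3 x1 n3 nx1 h34).mp h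
    simp only [Set.pair_eq_pair_iff] at this
    tauto
  have n3x2 : a3 * x2 ≠ 0 := by
    intro h
    have := (hadj a3 x2 n3 nx2 h35).mp h
    simp only [Set.pair_eq_pair_iff] at this
    tauto
  have nx1x2 : x1 * x2 ≠ 0 := by
    intro h
    have := (hadj x1 x2 nx1 nx2 h45).mp h
    simp only [Set.pair_eq_pair_iff] at this
    tauto
  -- Step 1: a1 * x2 = a1
  have s1 : a1 * x2 = a1 := by
    have kx1 : x1 * (a1 * x2) = 0 := by rw [← mul_assoc, mul_comm x1 a1, z1x1, zero_mul]
    have ka3 : a3 * (a1 * x2) = 0 := by rw [← mul_assoc, mul_comm a3 a1, z13, zero_mul]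
    rcases hall (a1 * x2) with h | h | h | h | h | h
    · exact absurd h n1x2
    · exact h
    · rw [h] at kx1; rw [mul_comm] at kx1; exact absurd kx1 n2x1
    · rw [h] at kx1; rw [mul_comm] at kx1; exact absurd kx1 n3x1
    · rw [h] at ka3; exact absurd ka3 n3x1
    · rw [h] at ka3; exact absurd ka3 n3x2
  -- Step 2: a2 * x1 = a2
  have s2 : a2 * x1 = a2 := by
    have kx2 : x2 * (a2 * x1) = 0 := by rw [← mul_assoc, mul_comm x2 a2, z2x2, zero_mul]
    have ka3 : a3 * (a2 * x1) = 0 := by rw [← mul_assoc, mul_comm a3 a2, z23, zero_mul]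
    rcases hall (a2 * x1) with h | h | h | h | h | h
    · exact absurd h n2x1
    · rw [h] at kx2; rw [mul_comm] at kx2; exact absurd kx2 n1x2
    · exact h
    · rw [h] at kx2; rw [mul_comm] at kx2; exact absurd kx2 n3x2
    · rw [h] at ka3; exact absurd ka3 n3x1
    · rw [h] at ka3; exact absurd ka3 n3x2
  -- Step 3: x1 * x2 ∈ {a1, a2, a3}
  have kP1 : a1 * (x1 * x2) = 0 := by rw [← mul_assoc, z1x1, zero_mul]
  have kP2 : a2 * (x1 * x2) = 0 := by
    rw [mul_comm x1 x2, ← mul_assoc, z2x2, zero_mul]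
  have hP : x1 * x2 = a1 ∨ x1 * x2 = a2 ∨ x1 * x2 = a3 := by
    rcases hall (x1 * x2) with h | h | h | h | h | h
    · exact absurd h nx1x2
    · exact Or.inl h
    · exact Or.inr (Or.inl h)
    · exact Or.inr (Or.inr h)
    · rw [h, s2] at kP2; exact absurd kP2 n2
    · rw [h, s1] at kP1; exact absurd kP1 n1
  -- Step 4: x1 * x1 = x1
  have s5 : x1 * x1 = x1 := by
    have kB : a2 * (x1 * x1) = a2 := by rw [← mul_assoc, s2, s2]
    rcases hall (x1 * x1) with h | h | h | h | h | h
    · rw [h, mul_zero] at kB; exact absurd kB.symm n2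
    · rw [h, mul_comm, z12] at kB; exact absurd kB.symm n2
    · -- hard case: x1 * x1 = a2
      exfalso
      have k1 : x1 * (x1 * x2) = 0 := by rw [← mul_assoc, h, z2x2]
      have hxa : x1 * x2 = a1 := by
        rcases hP with h' | h' | h'
        · exact h'
        · rw [h'] at k1; rw [mul_comm, s2] at k1; exact absurd k1 n2
        · rw [h'] at k1; rw [mul_comm] at k1; exact absurd k1 n3x1
      have kt : x1 * (a3 * x1) = 0 := by
        rw [mul_comm a3 x1, ← mul_assoc, h, z23]
      rcases hall (a3 * x1) with h' | h' | h' | h' | h' | h'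
      · exact absurd h' n3x1
      · have k2 : x2 * (a3 * x1) = 0 := by
          rw [mul_comm a3 x1, ← mul_assoc, mul_comm x2 x1, hxa, z13]
        rw [h', mul_comm, s1] at k2; exact absurd k2 n1
      · rw [h', mul_comm, s2] at kt; exact absurd kt n2
      · rw [h', mul_comm] at kt; exact absurd kt n3x1
      · rw [h', h] at kt; exact absurd kt n2
      · rw [h', hxa] at kt; exact absurd kt n1
    · rw [h, z23] at kB; exact absurd kB.symm n2
    · exact h
    · rw [h, z2x2] at kB; exact absurd kB.symm n2
  -- Step 5: x2 * x2 = x2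
  have s6 : x2 * x2 = x2 := by
    have kB : a1 * (x2 * x2) = a1 := by rw [← mul_assoc, s1, s1]
    rcases hall (x2 * x2) with h | h | h | h | h | h
    · rw [h, mul_zero] at kB; exact absurd kB.symm n1
    · -- hard case: x2 * x2 = a1
      exfalso
      have k1 : x2 * (x1 * x2) = 0 := by
        rw [mul_comm x1 x2, ← mul_assoc, h, z1x1]
      have hxa : x1 * x2 = a2 := by
        rcases hP with h' | h' | h'
        · rw [h'] at k1; rw [mul_comm, s1] at k1; exact absurd k1 n1
        · exact h'
        · rw [h'] at k1; rw [mul_comm] at k1; exact absurd k1 n3x2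
      have kt : x2 * (a3 * x2) = 0 := by
        rw [mul_comm a3 x2, ← mul_assoc, h, z13]
      rcases hall (a3 * x2) with h' | h' | h' | h' | h' | h'
      · exact absurd h' n3x2
      · rw [h', mul_comm, s1] at kt; exact absurd kt n1
      · have k2 : x1 * (a3 * x2) = 0 := by
          rw [mul_comm a3 x2, ← mul_assoc, hxa, z23]
        rw [h', mul_comm, s2] at k2; exact absurd k2 n2
      · rw [h', mul_comm] at kt; exact absurd kt n3x2
      · rw [h', mul_comm x2 x1, hxa] at kt; exact absurd kt n2
      · rw [h', h] at kt; exact absurd kt n1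
    · rw [h, z12] at kB; exact absurd kB.symm n1
    · rw [h, z13] at kB; exact absurd kB.symm n1
    · rw [h, z1x1] at kB; exact absurd kB.symm n1
    · exact h
  -- Step 6: x1 * x2 = a3
  have s7 : x1 * x2 = a3 := by
    rcases hP with h | h | h
    · have w : x1 * (x1 * x2) = a1 := by rw [← mul_assoc, s5, h]
      rw [h, mul_comm, z1x1] at w; exact absurd w.symm n1
    · have w : x2 * (x1 * x2) = a2 := by
        rw [mul_comm x1 x2, ← mul_assoc, s6, mul_comm x2 x1, h]
      rw [h, mul_comm, z2x2] at w; exact absurd w.symm n2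
    · exact h
  -- Steps 7–9
  have s3 : a3 * x1 = a3 := by
    calc a3 * x1 = (x1 * x2) * x1 := by rw [s7]
    _ = (x1 * x1) * x2 := by rw [mul_assoc, mul_comm x2 x1, ← mul_assoc]
    _ = x1 * x2 := by rw [s5]
    _ = a3 := s7
  have s4 : a3 * x2 = a3 := by
    calc a3 * x2 = x1 * (x2 * x2) := by rw [← mul_assoc, s7]
    _ = x1 * x2 := by rw [s6]
    _ = a3 := s7
  have s8 : a3 * a3 = a3 := by
    calc a3 * a3 = (a3 * x1) * x2 := by rw [mul_assoc, s7]
    _ = a3 * x2 := by rw [s3]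
    _ = a3 := s4
  -- Step 10: a1 * a1 ∈ {0, a1}
  have s9 : a1 * a1 = 0 ∨ a1 * a1 = a1 := by
    have kx : x1 * (a1 * a1) = 0 := by
      rw [← mul_assoc, mul_comm x1 a1, z1x1, zero_mul]
    rcases hall (a1 * a1) with h | h | h | h | h | h
    · exact Or.inl h
    · exact Or.inr h
    · rw [h, mul_comm, s2] at kx; exact absurd kx n2
    · rw [h, mul_comm, s3] at kx; exact absurd kx n3
    · rw [h, s5] at kx; exact absurd kx nx1
    · rw [h, s7] at kx; exact absurd kx n3
  -- Step 11: a2 * a2 ∈ {0, a2}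
  have s10 : a2 * a2 = 0 ∨ a2 * a2 = a2 := by
    have kx : x2 * (a2 * a2) = 0 := by
      rw [← mul_assoc, mul_comm x2 a2, z2x2, zero_mul]
    rcases hall (a2 * a2) with h | h | h | h | h | h
    · exact Or.inl h
    · rw [h, mul_comm, s1] at kx; exact absurd kx n1
    · exact Or.inr h
    · rw [h, mul_comm, s4] at kx; exact absurd kx n3
    · rw [h, mul_comm, s7] at kx; exact absurd kx n3
    · rw [h, s6] at kx; exact absurd kx nx2
  exact ⟨s1, s2, s3, s4, s5, s6, s7, s8, s9, s10⟩
end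

section
/- For n ≥ k ≥ 4, let M_{n,k} be the simple graph on the vertices a_1, …, a_n, x_1, …, x_k whose edges are a_i–a_j for i ≠ j together with a_i–x_i for 1 ≤ i ≤ k (the complete graph K_n together with k end vertices attached to k distinct vertices). Then there is no commutative zero-divisor semigroup S whose zero-divisor graph Γ(S) is isomorphic to M_{n,k}. -/
/-- The graph M_{n,k} (for k ≤ n): the complete graph Kₙ on the vertices `inl i`
together with k end vertices `inr j`, where `inr j` is attached to `inl j`. -/
def Mgraph (n k : ℕ) : SimpleGraph (Fin n ⊕ Fin k) :=
  SimpleGraph.fromRel (fun u v =>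
    match u, v with
    | Sum.inl i, Sum.inl j => i ≠ j
    | Sum.inl i, Sum.inr j => (i : ℕ) = (j : ℕ)
    | _, _ => False)

lemma Mgraph_adj_inl_inl {n k : ℕ} (i j : Fin n) :
    (Mgraph n k).Adj (Sum.inl i) (Sum.inl j) ↔ i ≠ j := by
  simp [Mgraph, SimpleGraph.fromRel_adj]; tauto

lemma Mgraph_adj_inl_inr {n k : ℕ} (i : Fin n) (j : Fin k) :
    (Mgraph n k).Adj (Sum.inl i) (Sum.inr j) ↔ (i:ℕ) = (j:ℕ) := by
  simp [Mgraph, SimpleGraph.fromRel_adj]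

lemma Mgraph_adj_inr_inl {n k : ℕ} (i : Fin k) (j : Fin n) :
    (Mgraph n k).Adj (Sum.inr i) (Sum.inl j) ↔ (j:ℕ) = (i:ℕ) := by
  simp [Mgraph, SimpleGraph.fromRel_adj]

lemma Mgraph_adj_inr_inr {n k : ℕ} (i j : Fin k) :
    ¬ (Mgraph n k).Adj (Sum.inr i) (Sum.inr j) := by
  simp [Mgraph, SimpleGraph.fromRel_adj]

/-- **Corollary 3.2(1).** For n ≥ k ≥ 4, the complete graph Kₙ together with k end
vertices attached to k distinct vertices has no corresponding semigroup. -/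
theorem no_semigroup_for_Mnk (n k : ℕ) (hk : 4 ≤ k) (hkn : k ≤ n)
    (S : Type*) [CommSemigroupWithZero S] (hS : IsZeroDivisorSemigroup S) :
    ¬ Nonempty (zdGraph S ≃g Mgraph n k) := by
  rintro ⟨φ⟩
  have h4n : 4 ≤ n := hk.trans hkn
  set V := {s : S // s ≠ 0 ∧ ∃ t : S, t ≠ 0 ∧ s * t = 0} with hV
  have hadj : ∀ a b : Fin n ⊕ Fin k,
      (zdGraph S).Adj (φ.symm a) (φ.symm b) ↔ (Mgraph n k).Adj a b :=
    fun a b => φ.symm.map_adj_iff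
  have hinj : Function.Injective φ.symm := φ.symm.injective
  -- semigroup elements corresponding to the vertices
  let A : Fin n → S := fun i => ((φ.symm (Sum.inl i) : V) : S)
  let X : Fin k → S := fun j => ((φ.symm (Sum.inr j) : V) : S)
  -- zero–adjacency dictionary
  have hzero : ∀ a b : Fin n ⊕ Fin k, a ≠ b →
      (((φ.symm a : V) : S) * ((φ.symm b : V) : S) = 0 ↔ (Mgraph n k).Adj a b) := by
    intro a b hab
    rw [← hadj]
    constructor
    · intro h
      exact ⟨fun he => hab (hinj he), h⟩
    · intro h; exact h.2
  -- classification of nonzero elements annihilated by two distinct a's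
  have hclass : ∀ (s : S), s ≠ 0 → ∀ i1 i2 : Fin n, i1 ≠ i2 →
      s * A i1 = 0 → s * A i2 = 0 → ∃ m : Fin n, s = A m := by
    intro s hs i1 i2 h12 h1 h2
    set w : V := ⟨s, hs, hS s⟩ with hw
    have key : ∀ i : Fin n, s * A i = 0 →
        φ w = Sum.inl i ∨ (Mgraph n k).Adj (φ w) (Sum.inl i) := by
      intro i hi
      by_cases he : w = φ.symm (Sum.inl i)
      · left; rw [he, RelIso.apply_symm_apply]
      · right
        have hAdj : (zdGraph S).Adj w (φ.symm (Sum.inl i)) := ⟨he, hi⟩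
        have := φ.map_adj_iff.mpr hAdj
        rwa [RelIso.apply_symm_apply] at this
    have k1 := key i1 h1
    have k2 := key i2 h2
    match hfw : φ w with
    | Sum.inl m =>
      refine ⟨m, ?_⟩
      have hwm : φ.symm (Sum.inl m) = w := by rw [← hfw, RelIso.symm_apply_apply]
      show s = ((φ.symm (Sum.inl m) : V) : S)
      rw [hwm]
    | Sum.inr jj =>
      exfalso
      rw [hfw] at k1 k2
      rcases k1 with h | h
      · exact absurd h (by simp)
      · rcases k2 with h' | h'
        · exact absurd h' (by simp)
        · rw [Mgraph_adj_inr_inl] at h h'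
          exact h12 (Fin.ext (h.trans h'.symm))
  have hAA : ∀ i j : Fin n, i ≠ j → A i * A j = 0 := by
    intro i j hij
    exact (hzero _ _ (by simp [hij])).mpr ((Mgraph_adj_inl_inl i j).mpr hij)
  have hAX : ∀ (i : Fin n) (j : Fin k), (i:ℕ) = (j:ℕ) → A i * X j = 0 := by
    intro i j hij
    exact (hzero _ _ (by simp)).mpr ((Mgraph_adj_inl_inr i j).mpr hij)
  have hAXne : ∀ (i : Fin n) (j : Fin k), (i:ℕ) ≠ (j:ℕ) → A i * X j ≠ 0 := by
    intro i j hij h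
    exact hij ((Mgraph_adj_inl_inr i j).mp ((hzero _ _ (by simp)).mp h))
  have hXXne : ∀ j j' : Fin k, j ≠ j' → X j * X j' ≠ 0 := by
    intro j j' hjj h
    exact Mgraph_adj_inr_inr j j' ((hzero _ _ (by simp [hjj])).mp h)
  have hAXiff : ∀ (i : Fin n) (j : Fin k), A i * X j = 0 ↔ (i:ℕ) = (j:ℕ) := by
    intro i j
    rw [hzero _ _ (by simp), Mgraph_adj_inl_inr]
  -- an AC helper
  have hac : ∀ a b c : S, a * b * c = (c * a) * b := by
    intro a b c; rw [mul_comm, ← mul_assoc]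
  -- indices
  let i0 : Fin n := ⟨0, by omega⟩
  let i1 : Fin n := ⟨1, by omega⟩
  let y0 : Fin k := ⟨0, by omega⟩
  let y1 : Fin k := ⟨1, by omega⟩
  -- Step 1 : X 0 * X 1 = A m for some m
  have hp0 : X y0 * X y1 ≠ 0 := hXXne _ _ (by simp [y0, y1, Fin.ext_iff])
  obtain ⟨m, hm⟩ := hclass (X y0 * X y1) hp0 i0 i1 (by simp [i0, i1, Fin.ext_iff])
    (by rw [hac, hAX i0 y0 rfl, zero_mul])
    (by rw [mul_assoc, mul_comm (X y1), hAX i1 y1 rfl, mul_zero])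
  -- Step 2 : choose jv ∈ {2,3} with jv ≠ m
  obtain ⟨jv, hjv23, hjvm⟩ : ∃ jv : ℕ, (jv = 2 ∨ jv = 3) ∧ jv ≠ (m:ℕ) := by
    by_cases h : (m:ℕ) = 2
    · exact ⟨3, Or.inr rfl, by omega⟩
    · exact ⟨2, Or.inl rfl, fun hh => h hh.symm⟩
  have hjvk : jv < k := by omega
  have hjvn : jv < n := by omega
  let j : Fin k := ⟨jv, hjvk⟩
  let j' : Fin n := ⟨jv, hjvn⟩
  -- Step 3 : y = A j' * X 0 is a nonzero element annihilated by A 0 and A 1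
  set y : S := A j' * X y0 with hy
  have hy0 : y ≠ 0 := hAXne j' y0 (by simp [j', y0]; omega)
  have hya0 : y * A i0 = 0 := by
    rw [hy, hac, mul_comm (A i0) (A j'), hAA j' i0 (by simp [j', i0, Fin.ext_iff]; omega), zero_mul]
  have hya1 : y * A i1 = 0 := by
    rw [hy, hac, mul_comm (A i1) (A j'), hAA j' i1 (by simp [j', i1, Fin.ext_iff]; omega), zero_mul]
  obtain ⟨t, ht⟩ := hclass y hy0 i0 i1 (by simp [i0, i1, Fin.ext_iff]) hya0 hya1
  -- Step 4 : y * X j = 0 forces (t:ℕ) = jv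
  have hyxj : y * X j = 0 := by
    rw [hy, hac, mul_comm (X j) (A j'), hAX j' j rfl, zero_mul]
  have htj : (t:ℕ) = jv := by
    have h2 : A t * X j = 0 := by rw [← ht]; exact hyxj
    have := (hAXiff t j).mp h2
    simpa [j] using this
  -- Step 5 : y * X 1 = 0 forces (t:ℕ) = 1
  have hyx1 : y * X y1 = 0 := by
    rw [hy, mul_assoc, hm, hAA j' m (by simp [j', Fin.ext_iff]; omega)]
  have ht1 : (t:ℕ) = 1 := by
    have h2 : A t * X y1 = 0 := by rw [← ht]; exact hyx1
    have := (hAXiff t y1).mp h2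
    simpa [y1] using this
  omega
end
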